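/- Let M be a binary matroid such that M = M1 Δ M2, where Δ is a 1-sum, 2-sum, or Y-sum of binary matroids M1 and M2. If M has no coloop, then neither M1 nor M2 has a coloop. -/
import Mathlib


/-- A binary matroid, given by its ground set and its cycle space (a GF(2)-subspace,
presented as a family of subsets of the ground set containing `∅` and closed under
symmetric difference). -/
structure BinaryMatroid (α : Type*) [DecidableEq α] where
  E : Finset α
  cycles : Set (Finset α)
  subset_ground : ∀ C ∈ cycles, C ⊆ E
  empty_mem : ∅ ∈ cycles
  symmDiff_mem : ∀ C ∈ cycles, ∀ D ∈ cycles, symmDiff C D ∈ cycles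

variable {α : Type*} [DecidableEq α]

/-- A loop: a one-element cycle. -/
def BinaryMatroid.IsLoop (M : BinaryMatroid α) (e : α) : Prop := {e} ∈ M.cycles

/-- A coloop: an element of the ground set contained in no cycle. -/
def BinaryMatroid.IsColoop (M : BinaryMatroid α) (e : α) : Prop :=
  e ∈ M.E ∧ ∀ C ∈ M.cycles, e ∉ C

/-- A circuit: a minimal nonempty cycle. -/
def BinaryMatroid.IsCircuit (M : BinaryMatroid α) (C : Finset α) : Prop :=
  C ∈ M.cycles ∧ C.Nonempty ∧ ∀ C' ∈ M.cycles, C'.Nonempty → C' ⊆ C → C' = C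

/-- A cocycle: a subset of the ground set meeting every cycle evenly. -/
def BinaryMatroid.IsCocycle (M : BinaryMatroid α) (D : Finset α) : Prop :=
  D ⊆ M.E ∧ ∀ C ∈ M.cycles, Even ((D ∩ C).card)

/-- A cocircuit: a minimal nonempty cocycle. -/
def BinaryMatroid.IsCocircuit (M : BinaryMatroid α) (D : Finset α) : Prop :=
  M.IsCocycle D ∧ D.Nonempty ∧ ∀ D', M.IsCocycle D' → D'.Nonempty → D' ⊆ D → D' = D

/-- `M = M1 Δ M2`. -/
def DeltaSum (M M1 M2 : BinaryMatroid α) : Prop :=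
  M.E = symmDiff M1.E M2.E ∧
  M.cycles = {C | C ⊆ M.E ∧ ∃ C1 ∈ M1.cycles, ∃ C2 ∈ M2.cycles, C = symmDiff C1 C2}


lemma deltaSum_comm {M M1 M2 : BinaryMatroid α} (h : DeltaSum M M1 M2) :
    DeltaSum M M2 M1 := by
  obtain ⟨h1, h2⟩ := h
  constructor
  · rw [h1, symmDiff_comm]
  · rw [h2]
    ext C
    simp only [Set.mem_setOf_eq]
    constructor
    · rintro ⟨hC, C1, hC1, C2, hC2, rfl⟩
      exact ⟨hC, C2, hC2, C1, hC1, (symmDiff_comm C1 C2)⟩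
    · rintro ⟨hC, C2, hC2, C1, hC1, rfl⟩
      exact ⟨hC, C1, hC1, C2, hC2, (symmDiff_comm C2 C1)⟩

lemma coloop_lift {M M1 M2 : BinaryMatroid α} {e : α} (h : DeltaSum M M1 M2)
    (he : M1.IsColoop e) (he2 : e ∉ M2.E) : M.IsColoop e := by
  obtain ⟨hE, hcyc⟩ := h
  obtain ⟨heE, heC⟩ := he
  refine ⟨by rw [hE]; simp [Finset.mem_symmDiff, heE, he2], ?_⟩
  intro C hC
  rw [hcyc] at hC
  obtain ⟨-, C1, hC1, C2, hC2, rfl⟩ := hC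
  have h1 : e ∉ C1 := heC C1 hC1
  have h2 : e ∉ C2 := fun hx => he2 (M2.subset_ground C2 hC2 hx)
  simp [Finset.mem_symmDiff, h1, h2]

lemma cocircuit_no_coloop {M1 : BinaryMatroid α} {D : Finset α} {e : α}
    (hD : M1.IsCocircuit D) (hcard : D.card = 3) (heD : e ∈ D) : ¬ M1.IsColoop e := by
  rintro ⟨heE, heC⟩
  obtain ⟨hcoc, hne, hmin⟩ := hD
  have hsingle : M1.IsCocycle {e} := by
    refine ⟨Finset.singleton_subset_iff.mpr heE, fun C hC => ?_⟩
    have : ({e} : Finset α) ∩ C = ∅ := by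
      rw [Finset.eq_empty_iff_forall_notMem]
      intro x hx
      simp only [Finset.mem_inter, Finset.mem_singleton] at hx
      exact heC C hC (hx.1 ▸ hx.2)
    simp [this]
  have := hmin {e} hsingle (Finset.singleton_nonempty e)
    (Finset.singleton_subset_iff.mpr heD)
  rw [← this] at hcard
  simp at hcard

lemma stmt_11_side (M M1 M2 : BinaryMatroid α)
    (hsum : DeltaSum M M1 M2)
    (hcase :
      Disjoint M1.E M2.E ∨
      (∃ e, M1.E ∩ M2.E = {e} ∧ ¬ M1.IsColoop e) ∨
      (M1.IsCocircuit (M1.E ∩ M2.E) ∧ (M1.E ∩ M2.E).card = 3))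
    (hM : ¬ ∃ e, M.IsColoop e) :
    ¬ ∃ e, M1.IsColoop e := by
  rintro ⟨e, he⟩
  have he2 : e ∉ M2.E := by
    intro hmem
    have hin : e ∈ M1.E ∩ M2.E := Finset.mem_inter.mpr ⟨he.1, hmem⟩
    rcases hcase with h | ⟨f, hf, hfnc⟩ | ⟨hcoc, hcard⟩
    · exact Finset.disjoint_left.mp h he.1 hmem
    · rw [hf, Finset.mem_singleton] at hin
      exact hfnc (hin ▸ he)
    · exact cocircuit_no_coloop hcoc hcard hin he
  exact hM ⟨e, coloop_lift hsum he he2⟩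

/-- If `M = M1 Δ M2` is a 1-sum, 2-sum or Y-sum and `M` has no coloop, then
neither `M1` nor `M2` has a coloop. -/
theorem stmt_11 (M M1 M2 : BinaryMatroid α)
    (hsum : DeltaSum M M1 M2)
    (hcase :
      Disjoint M1.E M2.E ∨
      (∃ e, M1.E ∩ M2.E = {e} ∧ ¬ M1.IsLoop e ∧ ¬ M2.IsLoop e ∧
        ¬ M1.IsColoop e ∧ ¬ M2.IsColoop e) ∨
      (M1.IsCocircuit (M1.E ∩ M2.E) ∧ M2.IsCocircuit (M1.E ∩ M2.E) ∧
        (M1.E ∩ M2.E).card = 3 ∧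
        (¬ ∃ C, M1.IsCircuit C ∧ C ⊆ M1.E ∩ M2.E) ∧
        (¬ ∃ C, M2.IsCircuit C ∧ C ⊆ M1.E ∩ M2.E)))
    (hM : ¬ ∃ e, M.IsColoop e) :
    (¬ ∃ e, M1.IsColoop e) ∧ (¬ ∃ e, M2.IsColoop e) := by
  constructor
  · apply stmt_11_side M M1 M2 hsum ?_ hM
    rcases hcase with h | ⟨f, hf, -, -, h1, -⟩ | ⟨h1, -, hc, -, -⟩
    · exact Or.inl h
    · exact Or.inr (Or.inl ⟨f, hf, h1⟩)
    · exact Or.inr (Or.inr ⟨h1, hc⟩)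
  · apply stmt_11_side M M2 M1 (deltaSum_comm hsum) ?_ hM
    rw [Finset.inter_comm] at hcase
    rcases hcase with h | ⟨f, hf, -, -, -, h2⟩ | ⟨-, h2, hc, -, -⟩
    · exact Or.inl h.symm
    · exact Or.inr (Or.inl ⟨f, hf, h2⟩)
    · exact Or.inr (Or.inr ⟨h2, hc⟩)
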